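/- arXiv:2507.08913 — 4 statements merged into one kernel-verified Lean document; each statement's English description precedes it below -/
import Mathlib

section
/- Let F be differentiable on R^d and ℓ-smooth in the sense that for all w and all w₁, w₂ in the ball B(w, C/ℓ(‖∇F(w)‖+C)) one has ‖∇F(w₁) − ∇F(w₂)‖ ≤ ℓ(‖∇F(w)‖+C)·‖w₁−w₂‖, where ℓ is non-decreasing and positive. Then for any G > 0 and any w with ‖∇F(w)‖ ≤ G, and any w₁, w₂ ∈ B(w, G/ℓ(2G)): (a) ‖∇F(w₁) − ∇F(w₂)‖ ≤ ℓ(2G)‖w₁−w₂‖, and (b) F(w₁) ≤ F(w₂) + ⟨∇F(w₂), w₁−w₂⟩ + (ℓ(2G)/2)‖w₁−w₂‖². -/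
theorem stmt_6 (d : ℕ) (F : EuclideanSpace ℝ (Fin d) → ℝ) (ℓ : ℝ → ℝ)
    (hℓ_mono : Monotone ℓ) (hℓ_pos : ∀ u, 0 ≤ u → 0 < ℓ u)
    (hdiff : Differentiable ℝ F)
    (hsmooth : ∀ w : EuclideanSpace ℝ (Fin d), ∀ C : ℝ, 0 < C →
      ∀ w₁ ∈ Metric.ball w (C / ℓ (‖gradient F w‖ + C)),
      ∀ w₂ ∈ Metric.ball w (C / ℓ (‖gradient F w‖ + C)),
        ‖gradient F w₁ - gradient F w₂‖ ≤ ℓ (‖gradient F w‖ + C) * ‖w₁ - w₂‖) :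
    ∀ G : ℝ, 0 < G → ∀ w : EuclideanSpace ℝ (Fin d), ‖gradient F w‖ ≤ G →
      ∀ w₁ ∈ Metric.ball w (G / ℓ (2 * G)), ∀ w₂ ∈ Metric.ball w (G / ℓ (2 * G)),
        ‖gradient F w₁ - gradient F w₂‖ ≤ ℓ (2 * G) * ‖w₁ - w₂‖ ∧
        F w₁ ≤ F w₂ + inner ℝ (gradient F w₂) (w₁ - w₂) + (ℓ (2 * G) / 2) * ‖w₁ - w₂‖ ^ 2 := by
  intro G hG w hw w₁ hw₁ w₂ hw₂
  set L : ℝ := ℓ (2 * G) with hL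
  have hgnn : (0:ℝ) ≤ ‖gradient F w‖ := norm_nonneg _
  have hℓ'pos : 0 < ℓ (‖gradient F w‖ + G) := hℓ_pos _ (by linarith)
  have hLpos : 0 < L := hℓ_pos _ (by linarith)
  have hle : ℓ (‖gradient F w‖ + G) ≤ L := hℓ_mono (by linarith)
  have hsub : Metric.ball w (G / L) ⊆ Metric.ball w (G / ℓ (‖gradient F w‖ + G)) :=
    Metric.ball_subset_ball (div_le_div_of_nonneg_left hG.le hℓ'pos hle)
  -- Part (a) for arbitrary points in the ball
  have key : ∀ x ∈ Metric.ball w (G / L), ∀ y ∈ Metric.ball w (G / L),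
      ‖gradient F x - gradient F y‖ ≤ L * ‖x - y‖ := by
    intro x hx y hy
    calc ‖gradient F x - gradient F y‖
        ≤ ℓ (‖gradient F w‖ + G) * ‖x - y‖ :=
          hsmooth w G hG x (hsub hx) y (hsub hy)
      _ ≤ L * ‖x - y‖ := mul_le_mul_of_nonneg_right hle (norm_nonneg _)
  refine ⟨key w₁ hw₁ w₂ hw₂, ?_⟩
  -- Part (b)
  set v : EuclideanSpace ℝ (Fin d) := w₁ - w₂ with hv
  have hball_conv : Convex ℝ (Metric.ball w (G / L)) := convex_ball _ _
  have hseg : ∀ t : ℝ, t ∈ Set.Icc (0:ℝ) 1 → w₂ + t • v ∈ Metric.ball w (G / L) := by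
    intro t ht
    have : w₂ + t • v = (1 - t) • w₂ + t • w₁ := by
      simp only [hv, smul_sub, sub_smul, one_smul]
      abel
    rw [this]
    exact hball_conv hw₂ hw₁ (by linarith [ht.1, ht.2]) ht.1 (by linarith [ht.2])
  -- derivative of the 1-d restriction
  have hD : ∀ t : ℝ, HasDerivAt (fun s : ℝ => F (w₂ + s • v))
      (inner ℝ (gradient F (w₂ + t • v)) v : ℝ) t := by
    intro t
    have h1 : HasDerivAt (fun s : ℝ => w₂ + s • v) v t := by
      simpa using ((hasDerivAt_id t).smul_const v).const_add w₂
    have h2 := (hdiff (w₂ + t • v)).hasGradientAt.hasFDerivAt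
    exact h2.comp_hasDerivAt t h1
  set g : ℝ → ℝ := fun t =>
    F (w₂ + t • v) - t * inner ℝ (gradient F w₂) v - L * t ^ 2 / 2 * ‖v‖ ^ 2 with hg
  have hgD : ∀ t : ℝ, HasDerivAt g
      ((inner ℝ (gradient F (w₂ + t • v)) v : ℝ) - inner ℝ (gradient F w₂) v
        - L * t * ‖v‖ ^ 2) t := by
    intro t
    have h3 : HasDerivAt (fun s : ℝ => s * (inner ℝ (gradient F w₂) v : ℝ))
        (inner ℝ (gradient F w₂) v : ℝ) t := by
      simpa using (hasDerivAt_id t).mul_const (inner ℝ (gradient F w₂) v : ℝ)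
    have h4 : HasDerivAt (fun s : ℝ => L * s ^ 2 / 2 * ‖v‖ ^ 2)
        (L * t * ‖v‖ ^ 2) t := by
      have := (((hasDerivAt_pow 2 t).const_mul L).div_const 2).mul_const (‖v‖ ^ 2)
      exact this.congr_deriv (by norm_num only; ring)
    exact ((hD t).sub h3).sub h4
  have hderiv_nonpos : ∀ t ∈ Set.Icc (0:ℝ) 1, deriv g t ≤ 0 := by
    intro t ht
    rw [(hgD t).deriv]
    have hpt := hseg t ht
    have hbound : ‖gradient F (w₂ + t • v) - gradient F w₂‖ ≤ L * (t * ‖v‖) := by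
      have := key (w₂ + t • v) hpt w₂ hw₂
      simpa [norm_smul, abs_of_nonneg ht.1] using this
    have hinner : (inner ℝ (gradient F (w₂ + t • v)) v : ℝ) - inner ℝ (gradient F w₂) v
        ≤ L * t * ‖v‖ ^ 2 := by
      have h1 : (inner ℝ (gradient F (w₂ + t • v)) v : ℝ) - inner ℝ (gradient F w₂) v
          = inner ℝ (gradient F (w₂ + t • v) - gradient F w₂) v := by
        rw [inner_sub_left]
      rw [h1]
      calc (inner ℝ (gradient F (w₂ + t • v) - gradient F w₂) v : ℝ)
          ≤ ‖gradient F (w₂ + t • v) - gradient F w₂‖ * ‖v‖ :=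
            real_inner_le_norm _ _
        _ ≤ L * (t * ‖v‖) * ‖v‖ :=
            mul_le_mul_of_nonneg_right hbound (norm_nonneg _)
        _ = L * t * ‖v‖ ^ 2 := by ring
    linarith
  have hanti : AntitoneOn g (Set.Icc (0:ℝ) 1) := by
    apply antitoneOn_of_deriv_nonpos (convex_Icc 0 1)
    · exact fun t _ => ((hgD t).differentiableAt).continuousAt.continuousWithinAt
    · exact fun t _ => ((hgD t).differentiableAt).differentiableWithinAt
    · intro t ht
      exact hderiv_nonpos t (interior_subset ht)
  have h01 : g 1 ≤ g 0 :=
    hanti (Set.mem_Icc.mpr ⟨le_refl 0, zero_le_one⟩)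
      (Set.mem_Icc.mpr ⟨zero_le_one, le_refl 1⟩) zero_le_one
  have e1 : w₂ + (1:ℝ) • v = w₁ := by simp [hv]
  have e0 : w₂ + (0:ℝ) • v = w₂ := by simp
  simp only [hg, e1, e0, one_mul, one_pow, zero_mul, mul_zero, sub_zero,
    ne_eq, OfNat.ofNat_ne_zero, not_false_eq_true, zero_pow, mul_one] at h01
  have : F w₁ ≤ F w₂ + inner ℝ (gradient F w₂) v + L / 2 * ‖v‖ ^ 2 := by
    nlinarith [h01]
  simpa [hv] using this
end

section
/- Let F be differentiable and ℓ-smooth (‖∇²F(x)‖ ≤ ℓ(‖∇F(x)‖) a.e. with ℓ non-decreasing, continuous, positive). Then for any w in dom(F), ‖∇F(w)‖² ≤ 2·ℓ(2‖∇F(w)‖)·(F(w) − F*), where F* = inf F > −∞. -/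
open scoped RealInnerProductSpace

theorem stmt_9 (d : ℕ) (F : EuclideanSpace ℝ (Fin d) → ℝ) (ℓ : ℝ → ℝ)
    (hℓ_mono : Monotone ℓ) (hℓ_cont : Continuous ℓ) (hℓ_pos : ∀ u, 0 ≤ u → 0 < ℓ u)
    (hdiff : Differentiable ℝ F)
    (hsmooth : ∀ w : EuclideanSpace ℝ (Fin d), ∀ C : ℝ, 0 < C →
      ∀ w₁ ∈ Metric.ball w (C / ℓ (‖gradient F w‖ + C)),
      ∀ w₂ ∈ Metric.ball w (C / ℓ (‖gradient F w‖ + C)),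
        ‖gradient F w₁ - gradient F w₂‖ ≤ ℓ (‖gradient F w‖ + C) * ‖w₁ - w₂‖)
    (Fstar : ℝ) (hbdd : ∀ w, Fstar ≤ F w) :
    ∀ w : EuclideanSpace ℝ (Fin d),
      ‖gradient F w‖ ^ 2 ≤ 2 * ℓ (2 * ‖gradient F w‖) * (F w - Fstar) := by
  intro w
  set g : EuclideanSpace ℝ (Fin d) := gradient F w with hg
  rcases eq_or_lt_of_le (norm_nonneg g) with hG | hGpos
  · rw [← hG]
    have h1 : 0 < ℓ (2 * 0) := hℓ_pos _ (by norm_num)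
    have h2 : 0 ≤ F w - Fstar := sub_nonneg.2 (hbdd w)
    nlinarith
  set G := ‖g‖ with hGdef
  set L := ℓ (2 * G) with hL
  have hLpos : 0 < L := hℓ_pos _ (by positivity)
  have hlip := hsmooth w G hGpos
  rw [show ‖gradient F w‖ + G = 2 * G by rw [← hg, ← hGdef]; ring] at hlip
  -- key descent inequality
  have key : ∀ η : ℝ, 0 ≤ η → η < 1 / L →
      F (w - η • g) ≤ F w - η * G ^ 2 + L * η ^ 2 * G ^ 2 / 2 := by
    intro η hη0 hη1
    set v : EuclideanSpace ℝ (Fin d) := -(η • g) with hv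
    have hnv : ‖v‖ = η * G := by
      rw [hv, norm_neg, norm_smul, Real.norm_of_nonneg hη0]
    have hmem : ∀ t ∈ Set.Icc (0:ℝ) 1, w + t • v ∈ Metric.ball w (G / L) := by
      intro t ht
      rw [Metric.mem_ball, dist_eq_norm, add_sub_cancel_left, norm_smul,
        Real.norm_of_nonneg ht.1, hnv]
      calc t * (η * G) ≤ 1 * (η * G) := by
            apply mul_le_mul_of_nonneg_right ht.2 (by positivity)
        _ = η * G := by ring
        _ < (1 / L) * G := by exact mul_lt_mul_of_pos_right hη1 hGpos
        _ = G / L := by ring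
    set D : ℝ → ℝ := fun t => ⟪gradient F (w + t • v), v⟫ with hD
    have hderiv : ∀ t : ℝ, HasDerivAt (fun s => F (w + s • v)) (D t) t := by
      intro t
      have hline : HasDerivAt (fun s : ℝ => w + s • v) v t := by
        simpa using ((hasDerivAt_id t).smul_const v).const_add w
      have hF := (hdiff (w + t • v)).hasGradientAt.hasFDerivAt
      have := hF.comp_hasDerivAt t hline
      rw [InnerProductSpace.toDual_apply_apply] at this; exact this
    have hDcont : ContinuousOn D (Set.Icc 0 1) := by
      have hlipG : LipschitzOnWith (Real.toNNReal (L * ‖v‖))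
          (fun t : ℝ => gradient F (w + t • v)) (Set.Icc 0 1) := by
        apply LipschitzOnWith.of_dist_le_mul
        intro x hx y hy
        rw [dist_eq_norm, dist_eq_norm]
        calc ‖gradient F (w + x • v) - gradient F (w + y • v)‖
            ≤ L * ‖(w + x • v) - (w + y • v)‖ :=
              hlip _ (hmem x hx) _ (hmem y hy)
          _ = Real.toNNReal (L * ‖v‖) * ‖x - y‖ := by
              rw [show (w + x • v) - (w + y • v) = (x - y) • v by module,
                norm_smul, Real.coe_toNNReal _ (by positivity)]
              ring
      exact (continuous_inner.comp_continuousOn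
        (hlipG.continuousOn.prodMk continuousOn_const))
    have hint : IntervalIntegrable D MeasureTheory.volume 0 1 :=
      (hDcont.mono (by rw [Set.uIcc_of_le zero_le_one])).intervalIntegrable
    have hftc : F (w + v) - F w = ∫ t in (0:ℝ)..1, D t := by
      have := intervalIntegral.integral_eq_sub_of_hasDerivAt
        (f := fun s => F (w + s • v)) (f' := D)
        (fun t _ => hderiv t) hint
      simp at this
      rw [this]
    have hbound : ∀ t ∈ Set.Icc (0:ℝ) 1, D t ≤ ⟪g, v⟫ + L * ‖v‖ ^ 2 * t := by
      intro t ht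
      have h1 : D t = ⟪g, v⟫ + ⟪gradient F (w + t • v) - g, v⟫ := by
        rw [hD]; simp [inner_sub_left]
      rw [h1]
      gcongr
      calc ⟪gradient F (w + t • v) - g, v⟫
          ≤ ‖gradient F (w + t • v) - g‖ * ‖v‖ := real_inner_le_norm _ _
        _ ≤ (L * ‖(w + t • v) - w‖) * ‖v‖ := by
            gcongr
            have hw : w ∈ Metric.ball w (G / L) :=
              Metric.mem_ball_self (by positivity)
            exact hlip _ (hmem t ht) _ hw
        _ = L * ‖v‖ ^ 2 * t := by
            rw [add_sub_cancel_left, norm_smul, Real.norm_of_nonneg ht.1]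
            ring
    have hintle : (∫ t in (0:ℝ)..1, D t) ≤ ∫ t in (0:ℝ)..1, (⟪g, v⟫ + L * ‖v‖ ^ 2 * t) := by
      apply intervalIntegral.integral_mono_on zero_le_one hint
      · apply IntervalIntegrable.add intervalIntegrable_const
        exact (IntervalIntegrable.const_mul intervalIntegral.intervalIntegrable_id _)
      · exact hbound
    have hcomp : (∫ t in (0:ℝ)..1, (⟪g, v⟫ + L * ‖v‖ ^ 2 * t)) =
        ⟪g, v⟫ + L * ‖v‖ ^ 2 / 2 := by
      rw [intervalIntegral.integral_add intervalIntegrable_const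
        ((intervalIntegral.intervalIntegrable_id).const_mul _),
        intervalIntegral.integral_const,
        intervalIntegral.integral_const_mul, integral_id]
      simp [smul_eq_mul]
      ring
    have hinnergv : ⟪g, v⟫ = -(η * G ^ 2) := by
      rw [hv, inner_neg_right, real_inner_smul_right, real_inner_self_eq_norm_sq]
    have hwv : w + v = w - η • g := by rw [hv]; abel
    have : F (w + v) - F w ≤ ⟪g, v⟫ + L * ‖v‖ ^ 2 / 2 := by
      rw [hftc]; exact hintle.trans (le_of_eq hcomp)
    rw [hwv, hinnergv, hnv] at this
    nlinarith
  -- pass to the limit η → 1/L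
  have hstep : ∀ η ∈ Set.Ico (0:ℝ) (1 / L),
      η * G ^ 2 - L * η ^ 2 * G ^ 2 / 2 ≤ F w - Fstar := by
    intro η hη
    have := key η hη.1 hη.2
    have h2 := hbdd (w - η • g)
    linarith
  have hcl : (1 / L) ∈ closure (Set.Ico (0:ℝ) (1 / L)) := by
    rw [closure_Ico (ne_of_lt (by positivity : (0:ℝ) < 1 / L))]
    exact Set.right_mem_Icc.2 (by positivity)
  have hne : (nhdsWithin (1 / L) (Set.Ico (0:ℝ) (1 / L))).NeBot :=
    mem_closure_iff_nhdsWithin_neBot.1 hcl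
  have hlim : (1 / L) * G ^ 2 - L * (1 / L) ^ 2 * G ^ 2 / 2 ≤ F w - Fstar := by
    have hcont : Filter.Tendsto (fun η : ℝ => η * G ^ 2 - L * η ^ 2 * G ^ 2 / 2)
        (nhdsWithin (1 / L) (Set.Ico (0:ℝ) (1 / L)))
        (nhds ((1 / L) * G ^ 2 - L * (1 / L) ^ 2 * G ^ 2 / 2)) := by
      apply Filter.Tendsto.mono_left _ nhdsWithin_le_nhds
      exact (Continuous.tendsto (by fun_prop) _)
    exact le_of_tendsto hcont (eventually_mem_nhdsWithin.mono hstep)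
  have hLne : L ≠ 0 := ne_of_gt hLpos
  have : G ^ 2 / (2 * L) ≤ F w - Fstar := by
    have h : (1 / L) * G ^ 2 - L * (1 / L) ^ 2 * G ^ 2 / 2 = G ^ 2 / (2 * L) := by
      field_simp; ring
    linarith [hlim, h ▸ hlim]
  calc G ^ 2 = 2 * L * (G ^ 2 / (2 * L)) := by field_simp
    _ ≤ 2 * L * (F w - Fstar) := by
        apply mul_le_mul_of_nonneg_left this (by positivity)
end

section
/- Let x_1, ..., x_n ∈ R^d with Σ_{i=1}^n x_i = 0 (gradients at the optimum sum to zero), let σ*² = (1/n)Σ_i ‖x_i‖², and let π be a uniformly random permutation of [n] with n ≥ 2. Then E[Σ_{i=1}^{n-1} ‖Σ_{j=i}^{n-1} x_{π(j+1)}‖²] = n(n+1)σ*²/6. -/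
open Finset in
lemma lemA {n : ℕ} (f : Fin n → ℝ) (j : Fin n) :
    (n : ℝ) * ∑ π : Equiv.Perm (Fin n), f (π j) = (Nat.factorial n : ℝ) * ∑ a, f a := by
  have hconst : ∀ j' : Fin n, ∑ π : Equiv.Perm (Fin n), f (π j') =
      ∑ π : Equiv.Perm (Fin n), f (π j) := by
    intro j'
    have := Equiv.sum_comp (Equiv.mulRight (Equiv.swap j j'))
      (fun π : Equiv.Perm (Fin n) => f (π j))
    simpa [Equiv.Perm.mul_apply, Equiv.swap_apply_left] using this
  have h1 : ∑ j' : Fin n, ∑ π : Equiv.Perm (Fin n), f (π j')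
      = (n : ℝ) * ∑ π : Equiv.Perm (Fin n), f (π j) := by
    rw [Finset.sum_congr rfl (fun j' _ => hconst j')]
    simp [Finset.card_univ, mul_comm]
  have h2 : ∑ j' : Fin n, ∑ π : Equiv.Perm (Fin n), f (π j')
      = (Nat.factorial n : ℝ) * ∑ a, f a := by
    rw [Finset.sum_comm]
    have : ∀ π : Equiv.Perm (Fin n), ∑ j' : Fin n, f (π j') = ∑ a, f a :=
      fun π => Equiv.sum_comp π f
    rw [Finset.sum_congr rfl (fun π _ => this π)]
    simp [Finset.card_univ, Fintype.card_perm, mul_comm]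
  rw [← h1, h2]

open Finset RealInnerProductSpace in
lemma lemB {n d : ℕ} (x : Fin n → EuclideanSpace ℝ (Fin d))
    (hsum : ∑ i, x i = 0) {j j' : Fin n} (hjj : j ≠ j') :
    (n : ℝ) * ((n : ℝ) - 1) * ∑ π : Equiv.Perm (Fin n), ⟪x (π j), x (π j')⟫
      = -(Nat.factorial n : ℝ) * ∑ a, ‖x a‖ ^ 2 := by
  have hconst : ∀ j'' : Fin n, j'' ≠ j →
      ∑ π : Equiv.Perm (Fin n), ⟪x (π j), x (π j'')⟫
        = ∑ π : Equiv.Perm (Fin n), ⟪x (π j), x (π j')⟫ := by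
    intro j'' hj''
    rcases eq_or_ne j'' j' with rfl | hne
    · rfl
    · have := Equiv.sum_comp (Equiv.mulRight (Equiv.swap j' j''))
        (fun π : Equiv.Perm (Fin n) => ⟪x (π j), x (π j'')⟫)
      have hj1 : Equiv.swap j' j'' j = j :=
        Equiv.swap_apply_of_ne_of_ne hjj (Ne.symm hj'')
      simpa [Equiv.Perm.mul_apply, Equiv.swap_apply_right, hj1] using this.symm
  have hcardER : (Finset.univ.erase j).card = n - 1 := by
    simp [Finset.card_erase_of_mem, Finset.card_univ]
  have hn1 : 1 ≤ n := Nat.one_le_iff_ne_zero.mpr (by rintro rfl; exact j.elim0)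
  have h1 : ∑ j'' ∈ Finset.univ.erase j, ∑ π : Equiv.Perm (Fin n), ⟪x (π j), x (π j'')⟫
      = ((n : ℝ) - 1) * ∑ π : Equiv.Perm (Fin n), ⟪x (π j), x (π j')⟫ := by
    rw [Finset.sum_congr rfl (fun j'' hj'' => hconst j'' (Finset.ne_of_mem_erase hj''))]
    rw [Finset.sum_const, hcardER, nsmul_eq_mul]
    congr 1
    push_cast [Nat.cast_sub hn1]
    ring
  have h2 : ∑ j'' ∈ Finset.univ.erase j, ∑ π : Equiv.Perm (Fin n), ⟪x (π j), x (π j'')⟫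
      = - ∑ π : Equiv.Perm (Fin n), ‖x (π j)‖ ^ 2 := by
    rw [Finset.sum_comm]
    have key : ∀ π : Equiv.Perm (Fin n),
        ∑ j'' ∈ Finset.univ.erase j, ⟪x (π j), x (π j'')⟫ = -‖x (π j)‖ ^ 2 := by
      intro π
      rw [← inner_sum]
      have hx : ∑ j'' ∈ Finset.univ.erase j, x (π j'') = - x (π j) := by
        have h3 : ∑ j'' : Fin n, x (π j'') = 0 := by
          rw [Equiv.sum_comp π x]; exact hsum
        have h4 := Finset.sum_erase_add Finset.univ (fun j'' => x (π j'')) (Finset.mem_univ j)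
        rw [h3] at h4
        exact eq_neg_of_add_eq_zero_left h4
      rw [hx, inner_neg_right, real_inner_self_eq_norm_sq]
    rw [Finset.sum_congr rfl (fun π _ => key π), Finset.sum_neg_distrib]
  rw [h2] at h1
  have hA := lemA (fun a => ‖x a‖ ^ 2) j
  nlinarith [hA, h1]

open Finset RealInnerProductSpace in
lemma lemC {n d : ℕ} (x : Fin n → EuclideanSpace ℝ (Fin d))
    (hsum : ∑ i, x i = 0) (S : Finset (Fin n)) :
    (n : ℝ) * ((n : ℝ) - 1) * ∑ π : Equiv.Perm (Fin n), ‖∑ j ∈ S, x (π j)‖ ^ 2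
      = (Nat.factorial n : ℝ) * (∑ a, ‖x a‖ ^ 2) * (S.card : ℝ) * ((n : ℝ) - S.card) := by
  set N : ℝ := (Nat.factorial n : ℝ) * ∑ a, ‖x a‖ ^ 2 with hN
  have hexp : ∀ π : Equiv.Perm (Fin n),
      ‖∑ j ∈ S, x (π j)‖ ^ 2 = ∑ j ∈ S, ∑ j' ∈ S, ⟪x (π j), x (π j')⟫ := by
    intro π
    rw [← real_inner_self_eq_norm_sq, sum_inner]
    exact Finset.sum_congr rfl fun j _ => inner_sum _ _ _
  rw [Finset.sum_congr rfl (fun π _ => hexp π), Finset.sum_comm]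
  have hswap : ∀ j ∈ S, ∑ π : Equiv.Perm (Fin n), ∑ j' ∈ S, ⟪x (π j), x (π j')⟫
      = ∑ j' ∈ S, ∑ π : Equiv.Perm (Fin n), ⟪x (π j), x (π j')⟫ :=
    fun j _ => Finset.sum_comm
  rw [Finset.sum_congr rfl hswap]
  have hrow : ∀ j ∈ S, (n : ℝ) * ((n : ℝ) - 1) *
      ∑ j' ∈ S, ∑ π : Equiv.Perm (Fin n), ⟪x (π j), x (π j')⟫
      = ((n : ℝ) - 1) * N - ((S.card : ℝ) - 1) * N := by
    intro j hj
    rw [← Finset.sum_erase_add S _ hj, mul_add]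
    have hdiag : (n : ℝ) * ((n : ℝ) - 1) * ∑ π : Equiv.Perm (Fin n), ⟪x (π j), x (π j)⟫
        = ((n : ℝ) - 1) * N := by
      have hA := lemA (fun a => ‖x a‖ ^ 2) j
      have : ∑ π : Equiv.Perm (Fin n), ⟪x (π j), x (π j)⟫
          = ∑ π : Equiv.Perm (Fin n), ‖x (π j)‖ ^ 2 :=
        Finset.sum_congr rfl fun π _ => real_inner_self_eq_norm_sq _
      rw [this, hN]
      nlinarith [hA]
    have hoff : (n : ℝ) * ((n : ℝ) - 1) *
        ∑ j' ∈ S.erase j, ∑ π : Equiv.Perm (Fin n), ⟪x (π j), x (π j')⟫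
        = -(((S.card : ℝ) - 1) * N) := by
      rw [Finset.mul_sum]
      have : ∀ j' ∈ S.erase j, (n : ℝ) * ((n : ℝ) - 1) *
          ∑ π : Equiv.Perm (Fin n), ⟪x (π j), x (π j')⟫ = -N := by
        intro j' hj'
        have := lemB x hsum (Ne.symm (Finset.ne_of_mem_erase hj'))
        rw [this, hN]; ring
      rw [Finset.sum_congr rfl this, Finset.sum_const, nsmul_eq_mul,
        Finset.card_erase_of_mem hj]
      have hc : 1 ≤ S.card := Finset.card_pos.mpr ⟨j, hj⟩
      push_cast [Nat.cast_sub hc]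
      ring
    rw [hdiag, hoff]; ring
  rw [Finset.mul_sum, Finset.sum_congr rfl hrow, Finset.sum_const, nsmul_eq_mul, hN]
  ring

lemma cardS {n : ℕ} (i : ℕ) :
    (Finset.univ.filter (fun j : Fin n => i ≤ (j : ℕ))).card = n - i := by
  rw [← Nat.card_Ico i n]
  refine Finset.card_bij (fun j _ => (j : ℕ)) ?_ ?_ ?_
  · intro j hj
    simp only [Finset.mem_filter, Finset.mem_univ, true_and] at hj
    exact Finset.mem_Ico.mpr ⟨hj, j.isLt⟩
  · intro a ha b hb hab
    exact Fin.val_injective hab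
  · intro a ha
    obtain ⟨h1, h2⟩ := Finset.mem_Ico.mp ha
    exact ⟨⟨a, h2⟩, by simp [h1], rfl⟩

lemma sum1 (n : ℕ) : ∑ i ∈ Finset.range n, (i : ℝ) = n * (n - 1) / 2 := by
  induction n with
  | zero => simp
  | succ m ih => rw [Finset.sum_range_succ, ih]; push_cast; ring

lemma sum2 (n : ℕ) : ∑ i ∈ Finset.range n, (i : ℝ) ^ 2
    = n * (n - 1) * (2 * n - 1) / 6 := by
  induction n with
  | zero => simp
  | succ m ih => rw [Finset.sum_range_succ, ih]; push_cast; ring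

lemma sumK (n : ℕ) : ∑ i ∈ Finset.Ico 1 n, ((n : ℝ) - i) * i
    = n * (n - 1) * (n + 1) / 6 := by
  have h : ∑ i ∈ Finset.range n, ((n : ℝ) - i) * i = n * (n - 1) * (n + 1) / 6 := by
    have : ∀ i : ℕ, ((n : ℝ) - i) * i = (n : ℝ) * i - (i : ℝ) ^ 2 := by intro i; ring
    rw [Finset.sum_congr rfl (fun i _ => this i), Finset.sum_sub_distrib,
      ← Finset.mul_sum, sum1, sum2]
    ring
  rcases Nat.eq_zero_or_pos n with h0 | h0
  · subst h0; simp
  · rw [Finset.range_eq_Ico, Finset.sum_eq_sum_Ico_succ_bot h0] at h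
    simpa using h

theorem stmt_15 (d n : ℕ) (hn : 2 ≤ n) (x : Fin n → EuclideanSpace ℝ (Fin d))
    (hsum : ∑ i, x i = 0) (σstar : ℝ)
    (hσ : σstar ^ 2 = (1 / (n : ℝ)) * ∑ i, ‖x i‖ ^ 2) :
    ((Fintype.card (Equiv.Perm (Fin n)) : ℝ))⁻¹ *
      ∑ π : Equiv.Perm (Fin n),
        ∑ i ∈ Finset.Ico 1 n,
          ‖∑ j ∈ Finset.univ.filter (fun j : Fin n => i ≤ (j : ℕ)), x (π j)‖ ^ 2
    = (n : ℝ) * ((n : ℝ) + 1) * σstar ^ 2 / 6 := by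
  have hn0 : (n : ℝ) ≠ 0 := by
    have : (0:ℝ) < n := by exact_mod_cast Nat.lt_of_lt_of_le Nat.zero_lt_two hn
    exact ne_of_gt this
  have hn1 : (n : ℝ) - 1 ≠ 0 := by
    have : (2:ℝ) ≤ n := by exact_mod_cast hn
    linarith
  have hfac : (Nat.factorial n : ℝ) ≠ 0 := by
    exact_mod_cast Nat.factorial_ne_zero n
  have hSig : (∑ a, ‖x a‖ ^ 2) = (n : ℝ) * σstar ^ 2 := by
    rw [hσ]; field_simp
  set T : ℝ := ∑ π : Equiv.Perm (Fin n),
      ∑ i ∈ Finset.Ico 1 n,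
        ‖∑ j ∈ Finset.univ.filter (fun j : Fin n => i ≤ (j : ℕ)), x (π j)‖ ^ 2 with hT
  have hTswap : T = ∑ i ∈ Finset.Ico 1 n, ∑ π : Equiv.Perm (Fin n),
      ‖∑ j ∈ Finset.univ.filter (fun j : Fin n => i ≤ (j : ℕ)), x (π j)‖ ^ 2 :=
    Finset.sum_comm
  have hper : ∀ i ∈ Finset.Ico 1 n,
      (n : ℝ) * ((n : ℝ) - 1) * ∑ π : Equiv.Perm (Fin n),
        ‖∑ j ∈ Finset.univ.filter (fun j : Fin n => i ≤ (j : ℕ)), x (π j)‖ ^ 2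
      = (Nat.factorial n : ℝ) * ((n : ℝ) * σstar ^ 2) * (((n : ℝ) - i) * i) := by
    intro i hi
    obtain ⟨hi1, hi2⟩ := Finset.mem_Ico.mp hi
    have hc := lemC x hsum (Finset.univ.filter (fun j : Fin n => i ≤ (j : ℕ)))
    rw [cardS i, hSig] at hc
    rw [hc]
    push_cast [Nat.cast_sub hi2.le]
    ring
  have hTkey : (n : ℝ) * ((n : ℝ) - 1) * T
      = (Nat.factorial n : ℝ) * ((n : ℝ) * σstar ^ 2) *
        ((n : ℝ) * ((n : ℝ) - 1) * ((n : ℝ) + 1) / 6) := by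
    rw [hTswap, Finset.mul_sum, Finset.sum_congr rfl hper, ← Finset.mul_sum, sumK]
  have hmul : (n : ℝ) * ((n : ℝ) - 1) ≠ 0 := mul_ne_zero hn0 hn1
  have hTval : T = (Nat.factorial n : ℝ) * ((n : ℝ) * ((n : ℝ) + 1) * σstar ^ 2 / 6) := by
    apply mul_left_cancel₀ hmul
    rw [hTkey]; ring
  rw [Fintype.card_perm, Fintype.card_fin, hTval, inv_mul_cancel_left₀ hfac]
end

section
/- Let f(·;i) be L-Lipschitz-smooth along the trajectory and satisfy the variance condition (1/n)Σ_i‖∇f(w;i) − ∇F(w)‖² ≤ A‖∇F(w)‖² + σ². Let w_0, ..., w_{n} be inner iterates with w_k − w_0 = −(η/n)Σ_{j=0}^{k-1}∇f(w_j; π_{j+1}) for an arbitrary fixed permutation π. If 0 < η ≤ 1/(√3·L), then Σ_{j=0}^{n-1} ‖w_j − w_0‖² ≤ n·η²·[(3A+2)‖∇F(w_0)‖² + 3σ²]. -/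
set_option maxHeartbeats 1000000

section helpers
variable {E : Type*} [NormedAddCommGroup E]

lemma norm_sq_add3 (x y z : E) : ‖x + y + z‖ ^ 2 ≤ 3 * (‖x‖ ^ 2 + ‖y‖ ^ 2 + ‖z‖ ^ 2) := by
  have h := norm_add₃_le (a := x) (b := y) (c := z)
  nlinarith [norm_nonneg x, norm_nonneg y, norm_nonneg z, norm_nonneg (x + y + z),
    sq_nonneg (‖x‖ - ‖y‖), sq_nonneg (‖x‖ - ‖z‖), sq_nonneg (‖y‖ - ‖z‖)]

lemma norm_sq_sum_le {ι : Type*} (s : Finset ι) (v : ι → E) :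
    ‖∑ j ∈ s, v j‖ ^ 2 ≤ (s.card : ℝ) * ∑ j ∈ s, ‖v j‖ ^ 2 := by
  have h1 : ‖∑ j ∈ s, v j‖ ≤ ∑ j ∈ s, ‖v j‖ := norm_sum_le _ _
  have h2 : (∑ j ∈ s, ‖v j‖) ^ 2 ≤ (s.card : ℝ) * ∑ j ∈ s, ‖v j‖ ^ 2 :=
    sq_sum_le_card_mul_sum_sq
  have h0 : (0:ℝ) ≤ ∑ j ∈ s, ‖v j‖ := Finset.sum_nonneg fun _ _ => norm_nonneg _
  nlinarith [norm_nonneg (∑ j ∈ s, v j)]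

lemma sum_filter_fin_lt {M : Type*} [AddCommMonoid M] (n k : ℕ) (hk : k ≤ n) (v : ℕ → M) :
    ∑ j ∈ Finset.univ.filter (fun j : Fin n => (j : ℕ) < k), v (j : ℕ)
      = ∑ j ∈ Finset.range k, v j := by
  rw [Finset.sum_filter,
    Fin.sum_univ_eq_sum_range (fun j => if j < k then v j else 0) n,
    ← Finset.sum_filter]
  congr 1
  ext x
  simp only [Finset.mem_filter, Finset.mem_range]
  omega

lemma card_filter_fin_lt (n k : ℕ) (hk : k ≤ n) :
    (Finset.univ.filter (fun j : Fin n => (j : ℕ) < k)).card = k := by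
  calc (Finset.univ.filter (fun j : Fin n => (j : ℕ) < k)).card
      = ∑ _j ∈ Finset.univ.filter (fun j : Fin n => (j : ℕ) < k), 1 :=
        Finset.card_eq_sum_ones _
    _ = ∑ _j ∈ Finset.range k, 1 := sum_filter_fin_lt (M := ℕ) n k hk (fun _ => 1)
    _ = k := by simp

lemma sum_range_id_le (n : ℕ) : ∑ k ∈ Finset.range n, (k : ℝ) ≤ (n:ℝ) ^ 2 / 2 := by
  induction n with
  | zero => simp
  | succ m ih =>
      rw [Finset.sum_range_succ]
      have hm : (0:ℝ) ≤ m := Nat.cast_nonneg m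
      push_cast
      nlinarith

lemma sum_range_sq_le (n : ℕ) : ∑ k ∈ Finset.range n, (k : ℝ) ^ 2 ≤ (n:ℝ) ^ 3 / 3 := by
  induction n with
  | zero => simp
  | succ m ih =>
      rw [Finset.sum_range_succ]
      have hm : (0:ℝ) ≤ m := Nat.cast_nonneg m
      push_cast
      nlinarith

end helpers

theorem stmt_19 (d n : ℕ) (hn : 1 ≤ n)
    (f : Fin n → EuclideanSpace ℝ (Fin d) → ℝ) (π : Equiv.Perm (Fin n))
    (w : ℕ → EuclideanSpace ℝ (Fin d)) (L A σ η : ℝ)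
    (F : EuclideanSpace ℝ (Fin d) → ℝ)
    (hF : F = fun v => (1 / (n : ℝ)) * ∑ i, f i v)
    (hL : 0 < L) (hA : 0 < A) (hσ : 0 < σ) (hη : 0 < η)
    (hηL : η ≤ 1 / (Real.sqrt 3 * L))
    (hLip : ∀ i : Fin n, ∀ j ≤ n,
      ‖gradient (f i) (w j) - gradient (f i) (w 0)‖ ≤ L * ‖w j - w 0‖)
    (hvar : (1 / (n : ℝ)) * ∑ i, ‖gradient (f i) (w 0) - gradient F (w 0)‖ ^ 2
      ≤ A * ‖gradient F (w 0)‖ ^ 2 + σ ^ 2)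
    (hiter : ∀ k ≤ n, w k - w 0 = -((η / (n : ℝ)) •
      ∑ j ∈ Finset.univ.filter (fun j : Fin n => (j : ℕ) < k),
        gradient (f (π j)) (w (j : ℕ)))) :
    ∑ j ∈ Finset.range n, ‖w j - w 0‖ ^ 2
      ≤ (n : ℝ) * η ^ 2 * ((3 * A + 2) * ‖gradient F (w 0)‖ ^ 2 + 3 * σ ^ 2) := by
  have hn0 : (0:ℝ) < n := by exact_mod_cast Nat.lt_of_lt_of_le Nat.zero_lt_one hn
  set G := gradient F (w 0) with hG
  set V : ℝ := A * ‖G‖ ^ 2 + σ ^ 2 with hV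
  have hV0 : 0 ≤ V := by positivity
  set S : ℝ := ∑ j ∈ Finset.range n, ‖w j - w 0‖ ^ 2 with hS
  have hS0 : 0 ≤ S := Finset.sum_nonneg fun _ _ => by positivity
  -- step size bound
  have hη2L : 3 * η ^ 2 * L ^ 2 ≤ 1 := by
    have h3L : 0 < Real.sqrt 3 * L := by positivity
    have h1 : η * (Real.sqrt 3 * L) ≤ 1 := by
      rw [le_div_iff₀ h3L] at hηL; exact hηL
    have hs3 : Real.sqrt 3 ^ 2 = 3 := Real.sq_sqrt (by norm_num)
    nlinarith [mul_le_mul h1 h1 (by positivity) (by norm_num)]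
  -- variance bound multiplied by n
  have hvar' : ∑ i, ‖gradient (f i) (w 0) - G‖ ^ 2 ≤ (n : ℝ) * V := by
    calc ∑ i, ‖gradient (f i) (w 0) - G‖ ^ 2
        = (n:ℝ) * ((1 / (n : ℝ)) * ∑ i, ‖gradient (f i) (w 0) - G‖ ^ 2) := by
          field_simp
      _ ≤ (n:ℝ) * V := mul_le_mul_of_nonneg_left hvar (le_of_lt hn0)
  -- partial sums of squares bounded by S
  have hpart : ∀ k ≤ n, ∑ j ∈ Finset.range k, ‖w j - w 0‖ ^ 2 ≤ S := by
    intro k hk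
    exact Finset.sum_le_sum_of_subset_of_nonneg (Finset.range_subset_range.mpr hk)
      (fun _ _ _ => by positivity)
  -- pointwise bound
  have key : ∀ k ≤ n, ‖w k - w 0‖ ^ 2 ≤ 3 * (η / n) ^ 2 *
      ((k : ℝ) * (L ^ 2 * S + (n:ℝ) * V) + (k : ℝ) ^ 2 * ‖G‖ ^ 2) := by
    intro k hk
    set s := Finset.univ.filter (fun j : Fin n => (j : ℕ) < k) with hs
    have hcardnat : s.card = k := card_filter_fin_lt n k hk
    have hcard : (s.card : ℝ) = k := by exact_mod_cast hcardnat
    have hwk := hiter k hk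
    have hnorm : ‖w k - w 0‖ = (η / n) * ‖∑ j ∈ s, gradient (f (π j)) (w (j:ℕ))‖ := by
      rw [hwk, norm_neg, norm_smul, Real.norm_eq_abs, abs_of_pos (by positivity)]
    set a : Fin n → EuclideanSpace ℝ (Fin d) :=
      fun j => gradient (f (π j)) (w (j:ℕ)) - gradient (f (π j)) (w 0) with ha
    set b : Fin n → EuclideanSpace ℝ (Fin d) :=
      fun j => gradient (f (π j)) (w 0) - G with hb
    have hdecomp : ∑ j ∈ s, gradient (f (π j)) (w (j:ℕ))
        = (∑ j ∈ s, a j) + (∑ j ∈ s, b j) + (k : ℝ) • G := by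
      have h1 : ∀ j ∈ s, gradient (f (π j)) (w (j:ℕ)) = a j + b j + G := by
        intro j _; simp only [ha, hb]; abel
      rw [Finset.sum_congr rfl h1, Finset.sum_add_distrib, Finset.sum_add_distrib,
        Finset.sum_const, hcardnat, ← Nat.cast_smul_eq_nsmul ℝ]
    have hAbound : ‖∑ j ∈ s, a j‖ ^ 2 ≤ (k : ℝ) * (L ^ 2 * S) := by
      calc ‖∑ j ∈ s, a j‖ ^ 2 ≤ (s.card : ℝ) * ∑ j ∈ s, ‖a j‖ ^ 2 := norm_sq_sum_le _ _
        _ ≤ (k : ℝ) * (L ^ 2 * S) := by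
            rw [hcard]
            apply mul_le_mul_of_nonneg_left _ (Nat.cast_nonneg k)
            have h1 : ∑ j ∈ s, ‖a j‖ ^ 2 ≤ ∑ j ∈ s, L ^ 2 * ‖w (j:ℕ) - w 0‖ ^ 2 := by
              apply Finset.sum_le_sum
              intro j hj
              have := hLip (π j) (j:ℕ) (le_of_lt j.isLt)
              nlinarith [norm_nonneg (a j), norm_nonneg (w (j:ℕ) - w 0)]
            have h2 : ∑ j ∈ s, L ^ 2 * ‖w (j:ℕ) - w 0‖ ^ 2
                = L ^ 2 * ∑ j ∈ Finset.range k, ‖w j - w 0‖ ^ 2 := by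
              rw [Finset.mul_sum]
              exact sum_filter_fin_lt n k hk (fun j => L ^ 2 * ‖w j - w 0‖ ^ 2)
            have h3 := hpart k hk
            nlinarith [sq_nonneg L]
    have hBbound : ‖∑ j ∈ s, b j‖ ^ 2 ≤ (k : ℝ) * ((n:ℝ) * V) := by
      calc ‖∑ j ∈ s, b j‖ ^ 2 ≤ (s.card : ℝ) * ∑ j ∈ s, ‖b j‖ ^ 2 := norm_sq_sum_le _ _
        _ ≤ (k : ℝ) * ((n:ℝ) * V) := by
            rw [hcard]
            apply mul_le_mul_of_nonneg_left _ (Nat.cast_nonneg k)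
            have h1 : ∑ j ∈ s, ‖b j‖ ^ 2 ≤ ∑ j : Fin n, ‖b j‖ ^ 2 :=
              Finset.sum_le_sum_of_subset_of_nonneg (Finset.subset_univ s)
                (fun _ _ _ => by positivity)
            have h2 : ∑ j : Fin n, ‖b j‖ ^ 2 = ∑ i, ‖gradient (f i) (w 0) - G‖ ^ 2 :=
              Equiv.sum_comp π (fun i => ‖gradient (f i) (w 0) - G‖ ^ 2)
            rw [← h2] at hvar'
            linarith
    have hCbound : ‖(k:ℝ) • G‖ ^ 2 = (k:ℝ) ^ 2 * ‖G‖ ^ 2 := by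
      rw [norm_smul, Real.norm_eq_abs, abs_of_nonneg (Nat.cast_nonneg k), mul_pow]
    have h3 : ‖∑ j ∈ s, gradient (f (π j)) (w (j:ℕ))‖ ^ 2
        ≤ 3 * ((k : ℝ) * (L ^ 2 * S + (n:ℝ) * V) + (k : ℝ) ^ 2 * ‖G‖ ^ 2) := by
      rw [hdecomp]
      have h4 := norm_sq_add3 (∑ j ∈ s, a j) (∑ j ∈ s, b j) ((k:ℝ) • G)
      linarith [hAbound, hBbound, hCbound.le, hCbound.ge]
    have h5 := mul_le_mul_of_nonneg_left h3 (sq_nonneg (η / n))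
    rw [hnorm, mul_pow]
    linarith
  -- sums of k and k^2
  have hsumk := sum_range_id_le n
  have hsumk2 := sum_range_sq_le n
  -- sum the pointwise bound
  set q : ℝ := ∑ k ∈ Finset.range n, (k : ℝ) with hq
  set r : ℝ := ∑ k ∈ Finset.range n, (k : ℝ) ^ 2 with hr
  have hq0 : 0 ≤ q := Finset.sum_nonneg fun k _ => Nat.cast_nonneg k
  have hr0 : 0 ≤ r := Finset.sum_nonneg fun k _ => sq_nonneg _
  have hsum : S ≤ 3 * (η / n) ^ 2 * (q * (L ^ 2 * S + (n:ℝ) * V) + r * ‖G‖ ^ 2) := by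
    calc S ≤ ∑ k ∈ Finset.range n, 3 * (η / n) ^ 2 *
        ((k : ℝ) * (L ^ 2 * S + (n:ℝ) * V) + (k : ℝ) ^ 2 * ‖G‖ ^ 2) := by
          apply Finset.sum_le_sum
          intro k hk
          exact key k (le_of_lt (Finset.mem_range.mp hk))
      _ = 3 * (η / n) ^ 2 * (q * (L ^ 2 * S + (n:ℝ) * V) + r * ‖G‖ ^ 2) := by
          rw [← Finset.mul_sum]
          congr 1
          rw [hq, hr, Finset.sum_mul, Finset.sum_mul, ← Finset.sum_add_distrib]
  -- finish
  have hb0 : 0 ≤ L ^ 2 * S + (n:ℝ) * V := by positivity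
  have e1 : q * (L ^ 2 * S + (n:ℝ) * V) ≤ ((n:ℝ) ^ 2 / 2) * (L ^ 2 * S + (n:ℝ) * V) :=
    mul_le_mul_of_nonneg_right hsumk hb0
  have e2 : r * ‖G‖ ^ 2 ≤ ((n:ℝ) ^ 3 / 3) * ‖G‖ ^ 2 :=
    mul_le_mul_of_nonneg_right hsumk2 (sq_nonneg _)
  have hsum2 : S ≤ 3 * (η / n) ^ 2 *
      (((n:ℝ) ^ 2 / 2) * (L ^ 2 * S + (n:ℝ) * V) + ((n:ℝ) ^ 3 / 3) * ‖G‖ ^ 2) := by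
    have := mul_le_mul_of_nonneg_left (add_le_add e1 e2)
      (by positivity : (0:ℝ) ≤ 3 * (η / n) ^ 2)
    linarith
  have hsum3 : S ≤ (3/2) * η ^ 2 * (L ^ 2 * S + (n:ℝ) * V) + η ^ 2 * (n:ℝ) * ‖G‖ ^ 2 := by
    have hne : (n:ℝ) ≠ 0 := ne_of_gt hn0
    have : 3 * (η / n) ^ 2 *
        (((n:ℝ) ^ 2 / 2) * (L ^ 2 * S + (n:ℝ) * V) + ((n:ℝ) ^ 3 / 3) * ‖G‖ ^ 2)
        = (3/2) * η ^ 2 * (L ^ 2 * S + (n:ℝ) * V) + η ^ 2 * (n:ℝ) * ‖G‖ ^ 2 := by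
      field_simp
    linarith
  have hfin : (3/2) * η ^ 2 * L ^ 2 * S ≤ S / 2 := by
    nlinarith [mul_le_mul_of_nonneg_right hη2L hS0]
  rw [hV] at hsum3
  nlinarith [hsum3, hfin, sq_nonneg η, mul_pos hn0 (mul_pos (mul_pos hη hη) hσ)]
end
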